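/- The cohomology of the cyclic de Rham complex (Ω_cyc(X), d) of a formal noncommutative manifold X is trivial. Explicitly, the operator H defined on a cyclic form a = (1/k) a_{i_1⋯i_k} φ_{i_1}⋯φ_{i_k} (each φ_{i_j} being x_{i_j} or dx_{i_j}) by H(a) = Σ_j (−1)^{♯(φ_{i_1})+⋯+♯(φ_{i_{j−1}})} (1/k) a_{i_1⋯i_k} φ_{i_1}⋯(H(φ_{i_j}))⋯φ_{i_k}, with H(x_{i_j}) = 0 and H(dx_{i_j}) = x_{i_j}, satisfies dH + Hd = Id. -/

import Mathlib

noncomputable section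
namespace KS

open Finset

attribute [local instance] Classical.propDecidable

/-- `(−1)^d` in `k`, for an integer `d`. -/
def ksgn (k : Type) [Field k] (d : ℤ) : k := if Even d then 1 else -1

/-- Sum of the (shifted) degrees of a tuple of basis elements. -/
def degSum {B : Type} (deg : B → ℤ) {n : ℕ} (js : Fin n → B) : ℤ := ∑ i, deg (js i)

/-- Sum of the degrees of the first `s` entries. -/
def degPre {B : Type} (deg : B → ℤ) {n : ℕ} (js : Fin n → B) (s : ℕ) : ℤ :=
  ∑ i ∈ Finset.range s, if h : i < n then deg (js ⟨i, h⟩) else 0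

/-- The Koszul sign `(-1)^{|x_1|'+⋯+|x_s|'}`. -/
def preSign (k : Type) [Field k] {B : Type} (deg : B → ℤ) {n : ℕ} (js : Fin n → B) (s : ℕ) : k :=
  ksgn k (degPre deg js s)

/-- Replace the block of length `j` starting at position `s` of `js` by the single
letter `l` (the index tuple for the outer operation in the A∞-equation). -/
def spliceIdx {B : Type} {n : ℕ} (js : Fin n → B) (s j : ℕ) (h : s + j ≤ n) (l : B) :
    Fin (n - j + 1) → B := fun i =>
  if hi : (i : ℕ) < s then js ⟨i, by omega⟩
  else if hi' : (i : ℕ) = s then l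
  else js ⟨(i : ℕ) + j - 1, by omega⟩

/-- The block of length `j` starting at position `s`. -/
def blockIdx {B : Type} {n : ℕ} (js : Fin n → B) (s j : ℕ) (h : s + j ≤ n) : Fin j → B :=
  fun i => js ⟨s + (i : ℕ), by omega⟩

/-! ### Formal noncommutative manifolds, cyclic differential forms, and calculus -/

/-- The alphabet of `𝒪(T[1]X)`: a letter is either a coordinate `x_i` (`inl i`) or its
differential `dx_i` (`inr i`). -/
abbrev Letter (ι : Type) := ι ⊕ ι

/-- A monomial word in the variables `x_i, dx_i`. -/
abbrev GWord (ι : Type) := List (Letter ι)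

/-- A noncommutative formal power series in `x_i, dx_i`: an element of `𝒪(T[1]X)`,
given by its coefficient on each monomial word. -/
abbrev WFun (K ι : Type) := GWord ι → K

/-- The underlying variable index of a letter. -/
def xIdx {ι : Type} : Letter ι → ι := Sum.elim id id

/-- The internal degree `|·|'` of a letter (`|dx_i| = |x_i|`). -/
def letterDeg {ι : Type} (degx : ι → ℤ) : Letter ι → ℤ := Sum.elim degx degx

/-- The form degree `♯` of a letter: `♯(x_i) = 0`, `♯(dx_i) = 1`. -/
def letterSharp {ι : Type} : Letter ι → ℤ := Sum.elim (fun _ => 0) (fun _ => 1)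

def wordDeg {ι : Type} (degx : ι → ℤ) (w : GWord ι) : ℤ := (w.map (letterDeg degx)).sum

def wordSharp {ι : Type} (w : GWord ι) : ℤ := (w.map (letterSharp)).sum

variable (K : Type) [Field K]

/-- The (noncommutative) product of formal power series. -/
def wmul {ι : Type} (f g : WFun K ι) : WFun K ι := fun w =>
  ∑ i ∈ Finset.range (w.length + 1), f (w.take i) * g (w.drop i)

/-- The indicator series of a monomial word. -/
def dirac {ι : Type} [DecidableEq ι] (u : GWord ι) : WFun K ι := fun w =>
  if w = u then 1 else 0

/-- The graded commutator `[u,v] = uv − (−1)^{|u|'|v|' + ♯u·♯v} vu` of two monomials. -/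
def gcomm {ι : Type} [DecidableEq ι] (degx : ι → ℤ) (u v : GWord ι) : WFun K ι :=
  dirac K (u ++ v)
    - ksgn K (wordDeg degx u * wordDeg degx v + wordSharp u * wordSharp v) • dirac K (v ++ u)

/-- The length-`m` homogeneous component of a series. -/
def trunc {ι : Type} (m : ℕ) (f : WFun K ι) : WFun K ι := fun w =>
  if w.length = m then f w else 0

/-- The closure `[𝒪(T[1]X), 𝒪(T[1]X)]_{top}` of the span of graded commutators in the
adic topology: a series lies in it iff each of its length-homogeneous components is a
(finite) combination of graded commutators. `Ω_{cyc}(X) = 𝒪(T[1]X)/[·,·]_{top}`. -/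
def CommT {ι : Type} [DecidableEq ι] (degx : ι → ℤ) : Submodule K (WFun K ι) where
  carrier := {f | ∀ m : ℕ, trunc K m f ∈
    Submodule.span K (Set.range fun uv : GWord ι × GWord ι => gcomm K degx uv.1 uv.2)}
  add_mem' := by
    intro f g hf hg m
    have : trunc K m (f + g) = trunc K m f + trunc K m g := by
      funext w; simp only [trunc, Pi.add_apply]; split <;> simp
    rw [this]; exact Submodule.add_mem _ (hf m) (hg m)
  zero_mem' := by
    intro m
    have : trunc K m (0 : WFun K ι) = 0 := by
      funext w; simp only [trunc, Pi.zero_apply]; split <;> rfl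
    rw [this]; exact Submodule.zero_mem _
  smul_mem' := by
    intro c f hf m
    have : trunc K m (c • f) = c • trunc K m f := by
      funext w; simp only [trunc, Pi.smul_apply, smul_eq_mul]; split <;> simp
    rw [this]; exact Submodule.smul_mem _ _ (hf m)

/-- The de Rham differential `d` on `𝒪(T[1]X)`: `d x_i = dx_i`, `d (dx_i) = 0`, extended
as a graded derivation (in coefficient form). -/
def Dop {ι : Type} : WFun K ι → WFun K ι := fun f w =>
  ∑ p ∈ Finset.range w.length,
    match w[p]? with
    | some (Sum.inr i) => ksgn K (wordSharp (w.take p)) * f (w.set p (Sum.inl i))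
    | _ => 0

/-- The contracting homotopy `H` (Poincaré lemma): `H(x_i) = 0`, `H(dx_i) = x_i`,
extended with the `1/k` normalization on words of length `k`. -/
def Hop {ι : Type} : WFun K ι → WFun K ι := fun f w =>
  (w.length : K)⁻¹ • ∑ p ∈ Finset.range w.length,
    match w[p]? with
    | some (Sum.inl i) => ksgn K (wordSharp (w.take p)) * f (w.set p (Sum.inr i))
    | _ => 0

/-- A formal vector field `ξ = ∑ ξ_i(x) ∂/∂x_i`, by the coefficients of the
series `ξ(x_i)`: `ξ(x_i) = ∑ vc ℓ (j_1,…,j_ℓ) i ⬝ x_{j_1}⋯x_{j_ℓ}`. -/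
abbrev VF (K ι : Type) := (ℓ : ℕ) → (Fin ℓ → ι) → ι → K

/-- The contraction (interior product) `i_ξ`: the derivation with `i_ξ(x_i) = 0` and
`i_ξ(dx_i) = ξ(x_i)`, in coefficient form. -/
def iContr {ι : Type} [DecidableEq ι] [Fintype ι] (degx : ι → ℤ) (v : VF K ι) :
    WFun K ι → WFun K ι := fun f w =>
  ∑ p ∈ Finset.range (w.length + 1), ∑ ℓ ∈ Finset.range (w.length + 1 - p),
    (if hblk : ((w.drop p).take ℓ).length = ℓ ∧ ((w.drop p).take ℓ).countP (·.isRight) = 0 then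
      ksgn K (wordSharp (w.take p) + wordDeg degx (w.take p)) *
        ∑ i : ι, v ℓ (fun t => xIdx (((w.drop p).take ℓ)[(t : ℕ)]'(by
            have h1 := hblk.1; have := t.isLt; omega))) i *
          f (w.take p ++ [Sum.inr i] ++ w.drop (p + ℓ))
    else 0)

/-- The Lie derivative `L_ξ = d ∘ i_ξ + i_ξ ∘ d`. -/
def LieD {ι : Type} [DecidableEq ι] [Fintype ι] (degx : ι → ℤ) (v : VF K ι)
    (f : WFun K ι) : WFun K ι :=
  Dop K (iContr K degx v f) + iContr K degx v (Dop K f)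

/-- A representative of a cyclic `s`-form: supported on words with exactly `s`
occurrences of `dx`. -/
def IsForm {ι : Type} (s : ℕ) (f : WFun K ι) : Prop :=
  ∀ w, f w ≠ 0 → w.countP (·.isRight) = s

/-- The constant two-form `∑ ω_{ab} (dx^a dx^b)_c`. -/
def constForm {ι : Type} (ω : ι → ι → K) : WFun K ι := fun w =>
  match w with
  | [Sum.inr a, Sum.inr b] => ω a b
  | _ => 0

/-- The series `ξ(x_i) ∈ 𝒪(X)` of a vector field (supported on `x`-words). -/
def serOf {ι : Type} (v : VF K ι) (i : ι) : List ι → K := fun u =>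
  v u.length (fun t => u[(t : ℕ)]'t.isLt) i

/-- The action of a (homogeneous, degree `dv`) vector field on functions
`𝒪(X) = K⟨⟨x_i⟩⟩`, as a derivation (substitution at one position). -/
def vActX {ι : Type} [Fintype ι] (degx : ι → ℤ) (dv : ℤ) (v : VF K ι) :
    (List ι → K) → (List ι → K) := fun g u =>
  ∑ p ∈ Finset.range (u.length + 1), ∑ ℓ ∈ Finset.range (u.length + 1 - p),
    (if hblk : ((u.drop p).take ℓ).length = ℓ then
      ksgn K (dv * ((u.take p).map degx).sum) *
        ∑ i : ι, v ℓ (fun t => ((u.drop p).take ℓ)[(t : ℕ)]'(by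
            have h1 := hblk; have := t.isLt; omega)) i *
          g (u.take p ++ [i] ++ u.drop (p + ℓ))
    else 0)

/-- Vanishing of the graded bracket `[v, w]` of vector fields of degrees `dv, dw`:
`v(w(x_i)) − (−1)^{dv·dw} w(v(x_i)) = 0` for all `i`. -/
def BracketZero {ι : Type} [Fintype ι] (degx : ι → ℤ) (dv dw : ℤ) (v w : VF K ι) : Prop :=
  ∀ (i : ι) (u : List ι),
    vActX K degx dv v (serOf K w i) u - ksgn K (dv * dw) * vActX K degx dw w (serOf K v i) u = 0

/-- A vector field is homogeneous of degree `dv` if `v(x_i)` has degree `degx i + dv`. -/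
def VFDeg {ι : Type} (degx : ι → ℤ) (v : VF K ι) (dv : ℤ) : Prop :=
  ∀ ℓ js i, v ℓ js i ≠ 0 → (∑ t, degx (js t)) = degx i + dv

/-- The expansion coefficient of a letter under the coordinate change
`x_i ↦ ∑ hc ℓ (j⃗) i x_{j_1}⋯x_{j_ℓ}` (so `dx_i ↦ d(…)`): the coefficient of the word
`u` in the image of the letter. -/
def expandLetter {ι : Type} (hc : VF K ι) : Letter ι → GWord ι → K
  | Sum.inl i, u => if u.countP (·.isRight) = 0
      then hc u.length (fun t => xIdx (u[(t : ℕ)]'t.isLt)) i else 0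
  | Sum.inr i, u => if u.countP (·.isRight) = 1
      then hc u.length (fun t => xIdx (u[(t : ℕ)]'t.isLt)) i else 0

/-- The induced substitution (pullback) on differential forms of a pointed coordinate
change `x_i ↦ ∑ hc ℓ (j⃗) i x_{j⃗}`. -/
def substForm {ι : Type} [Fintype ι] [DecidableEq ι] (hc : VF K ι) (β : WFun K ι) :
    WFun K ι := fun w =>
  ∑ cp : Composition w.length, ∑ ls : Fin cp.length → Letter ι,
    β (List.ofFn ls) *
      ∏ i, expandLetter K hc (ls i) (List.ofFn fun z => w.get (cp.embedding i z))

/-- The Lie derivative exponential `e^{L_v} = ∑_k (L_v)^k / k!` (a finite sum on each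
word, for `v` of length `≥ 2`). -/
def expLv {ι : Type} [DecidableEq ι] [Fintype ι] (degx : ι → ℤ) (v : VF K ι)
    (f : WFun K ι) : WFun K ι := fun w =>
  ∑ j ∈ Finset.range (w.length + 1),
    ((Nat.factorial j : K))⁻¹ * ((LieD K degx v)^[j] f) w

/-- The coordinate function `x_j` as a series. -/
def xvar {ι : Type} [DecidableEq ι] (j : ι) : WFun K ι := dirac K [Sum.inl j]

section PoincareAux

open Finset List

variable {ι : Type} (K : Type) [Field K]

/-! #### Sign lemmas -/

lemma ksgn_add (a b : ℤ) : ksgn K (a + b) = ksgn K a * ksgn K b := by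
  by_cases ha : Even a <;> by_cases hb : Even b <;>
    simp [ksgn, Int.even_add, ha, hb]

lemma ksgn_mul_self (a : ℤ) : ksgn K a * ksgn K a = 1 := by
  by_cases ha : Even a <;> simp [ksgn, ha]

lemma ksgn_congr {a b : ℤ} (h : Even (a - b)) : ksgn K a = ksgn K b := by
  unfold ksgn
  rw [if_congr (Int.even_sub.mp h) rfl rfl]

lemma ksgn_add_odd (a : ℤ) {b : ℤ} (hb : Odd b) : ksgn K (a + b) = -ksgn K a := by
  rw [ksgn_add]
  have : ksgn K b = -1 := by simp [ksgn, Int.not_even_iff_odd.mpr hb]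
  rw [this, mul_neg_one]

/-! #### wordSharp / wordDeg lemmas -/

lemma wordSharp_append (u v : GWord ι) :
    wordSharp (u ++ v) = wordSharp u + wordSharp v := by
  simp [wordSharp]

lemma eq_take_cons_drop {u : GWord ι} {p : ℕ} {b : Letter ι} (h : u[p]? = some b) :
    u = u.take p ++ b :: u.drop (p + 1) := by
  obtain ⟨hp, rfl⟩ := List.getElem?_eq_some_iff.mp h
  conv_lhs => rw [← List.take_append_drop p u, List.drop_eq_getElem_cons hp]

lemma sharp_set {u : GWord ι} {p : ℕ} {b : Letter ι} (h : u[p]? = some b) (a : Letter ι) :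
    wordSharp (u.set p a) = wordSharp u + (letterSharp a - letterSharp b) := by
  have hp : p < u.length := (List.getElem?_eq_some_iff.mp h).1
  rw [List.set_eq_take_append_cons_drop, if_pos hp]
  conv_rhs => rw [eq_take_cons_drop h]
  simp only [wordSharp, List.map_append, List.sum_append, List.map_cons, List.sum_cons]
  ring

lemma deg_set (degx : ι → ℤ) {u : GWord ι} {p : ℕ} {b : Letter ι} (h : u[p]? = some b)
    (a : Letter ι) :
    wordDeg degx (u.set p a) = wordDeg degx u + (letterDeg degx a - letterDeg degx b) := by
  have hp : p < u.length := (List.getElem?_eq_some_iff.mp h).1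
  rw [List.set_eq_take_append_cons_drop, if_pos hp]
  conv_rhs => rw [eq_take_cons_drop h]
  simp only [wordDeg, List.map_append, List.sum_append, List.map_cons, List.sum_cons]
  ring

lemma set_of_getElem? {u : GWord ι} {p : ℕ} {b : Letter ι} (h : u[p]? = some b) :
    u.set p b = u := by
  have hp : p < u.length := (List.getElem?_eq_some_iff.mp h).1
  rw [List.set_eq_take_append_cons_drop, if_pos hp]
  exact (eq_take_cons_drop h).symm

lemma take_set_le {w : GWord ι} {p q : ℕ} (h : q ≤ p) (a : Letter ι) :
    (w.set p a).take q = w.take q := by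
  rw [List.take_set]
  apply List.set_eq_of_length_le
  simp only [List.length_take]
  omega

lemma sharp_take_set_lt {w : GWord ι} {p q : ℕ} {b : Letter ι} (h : p < q)
    (hb : w[p]? = some b) (a : Letter ι) :
    wordSharp ((w.set p a).take q) = wordSharp (w.take q) + (letterSharp a - letterSharp b) := by
  rw [List.take_set]
  exact sharp_set (by rw [List.getElem?_take_of_lt h]; exact hb) a

end PoincareAux
section PoincareOps

open Finset List

variable {ι : Type} (K : Type) [Field K]

/-- `d`-substitution on letters: `dx_i ↦ x_i`. -/
def rD : Letter ι → Option (Letter ι) := fun c =>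
  match c with
  | Sum.inr i => some (Sum.inl i)
  | Sum.inl _ => none

/-- `H`-substitution on letters: `x_i ↦ dx_i`. -/
def rH : Letter ι → Option (Letter ι) := fun c =>
  match c with
  | Sum.inl i => some (Sum.inr i)
  | Sum.inr _ => none

/-- A generic one-letter substitution operator with Koszul signs. -/
def Sop (r : Letter ι → Option (Letter ι)) (f : WFun K ι) : WFun K ι := fun w =>
  ∑ p ∈ Finset.range w.length,
    (w[p]?.bind r).elim 0 (fun a => ksgn K (wordSharp (w.take p)) * f (w.set p a))

lemma Dop_eq (f : WFun K ι) : Dop K f = Sop K rD f := by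
  funext w
  unfold Dop Sop
  refine Finset.sum_congr rfl fun p _ => ?_
  rcases h : w[p]? with _ | (i | i) <;> simp [h, rD]

lemma Hop_eq (f : WFun K ι) (w : GWord ι) :
    Hop K f w = (w.length : K)⁻¹ * Sop K rH f w := by
  unfold Hop Sop
  rw [smul_eq_mul]
  congr 1
  refine Finset.sum_congr rfl fun p _ => ?_
  rcases h : w[p]? with _ | (i | i) <;> simp [h, rH]

variable (r : Letter ι → Option (Letter ι))

lemma Sop_sub (f g : WFun K ι) : Sop K r (f - g) = Sop K r f - Sop K r g := by
  funext w
  simp only [Sop, Pi.sub_apply, ← Finset.sum_sub_distrib]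
  refine Finset.sum_congr rfl fun p _ => ?_
  rcases h : w[p]?.bind r with _ | a <;> simp [h, mul_sub]

lemma Sop_add (f g : WFun K ι) : Sop K r (f + g) = Sop K r f + Sop K r g := by
  funext w
  simp only [Sop, Pi.add_apply, ← Finset.sum_add_distrib]
  refine Finset.sum_congr rfl fun p _ => ?_
  rcases h : w[p]?.bind r with _ | a <;> simp [h, mul_add]

lemma Sop_smul (c : K) (f : WFun K ι) : Sop K r (c • f) = c • Sop K r f := by
  funext w
  simp only [Sop, Pi.smul_apply, smul_eq_mul, Finset.mul_sum]
  refine Finset.sum_congr rfl fun p _ => ?_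
  rcases h : w[p]?.bind r with _ | a <;> simp [h] <;> ring

lemma Sop_zero : Sop K r (0 : WFun K ι) = 0 := by
  funext w
  apply Finset.sum_eq_zero
  intro p _
  rcases h : w[p]?.bind r with _ | a <;> simp [h]

lemma Sop_trunc (m : ℕ) (f : WFun K ι) :
    trunc K m (Sop K r f) = Sop K r (trunc K m f) := by
  funext w
  by_cases hl : w.length = m
  · simp only [trunc, if_pos hl, Sop]
    refine Finset.sum_congr rfl fun p _ => ?_
    rcases h : w[p]?.bind r with _ | a
    · simp [h]
    · simp [h, trunc, List.length_set, hl]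
  · simp only [trunc, if_neg hl, Sop]
    symm
    apply Finset.sum_eq_zero
    intro p _
    rcases h : w[p]?.bind r with _ | a
    · simp [h]
    · simp [h, trunc, List.length_set, hl]

lemma Dop_empty (f : WFun K ι) : Dop K f [] = 0 := by simp [Dop]

lemma Hop_empty (f : WFun K ι) : Hop K f [] = 0 := by simp [Hop]

end PoincareOps
section PoincareDirac

open Finset List

variable {ι : Type} (K : Type) [Field K] [DecidableEq ι]

lemma Sop_dirac (r r' : Letter ι → Option (Letter ι))
    (hinv : ∀ a b, r a = some b ↔ r' b = some a) (u : GWord ι) :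
    Sop K r (dirac K u) = ∑ p ∈ Finset.range u.length,
      (u[p]?.bind r').elim 0
        (fun a => ksgn K (wordSharp (u.take p)) • dirac K (u.set p a)) := by
  funext w
  rw [Finset.sum_apply]
  by_cases hl : w.length = u.length
  · unfold Sop
    rw [hl]
    refine Finset.sum_congr rfl fun p hp => ?_
    have hp' : p < u.length := Finset.mem_range.mp hp
    have hpw : p < w.length := by omega
    obtain ⟨cw, hw⟩ : ∃ c, w[p]? = some c := ⟨_, List.getElem?_eq_getElem hpw⟩
    obtain ⟨cu, hu⟩ : ∃ c, u[p]? = some c := ⟨_, List.getElem?_eq_getElem hp'⟩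
    rw [hw, hu, Option.bind_some, Option.bind_some]
    rcases hra : r cw with _ | a
    · rcases hrb : r' cu with _ | b
      · simp
      · -- r cw = none, r' cu = some b
        simp only [Option.elim_none, Option.elim_some, Pi.smul_apply, smul_eq_mul]
        have hz : dirac K (u.set p b) w = 0 := by
          unfold dirac
          rw [if_neg]
          intro heq
          have hwb : w[p]? = some b := by
            rw [heq, List.getElem?_set_self (by omega)]
          rw [hwb] at hw
          obtain rfl : cw = b := by injection hw.symm
          have := (hinv cw cu).mpr hrb
          rw [this] at hra
          exact nomatch hra
        rw [hz, mul_zero]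
    · rcases hrb : r' cu with _ | b
      · -- r cw = some a, r' cu = none
        simp only [Option.elim_none, Option.elim_some, Pi.zero_apply]
        have hz : dirac K u (w.set p a) = 0 := by
          unfold dirac
          rw [if_neg]
          intro heq
          have hua : u[p]? = some a := by
            rw [← heq, List.getElem?_set_self (by omega)]
          rw [hua] at hu
          obtain rfl : cu = a := by injection hu.symm
          have := (hinv cw cu).mp hra
          rw [this] at hrb
          exact nomatch hrb
        rw [hz, mul_zero]
      · -- both some
        simp only [Option.elim_some, Pi.smul_apply, smul_eq_mul]
        by_cases hc : w.set p a = u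
        · have hua : u[p]? = some a := by
            rw [← hc, List.getElem?_set_self (by omega)]
          rw [hua] at hu
          obtain rfl : cu = a := by injection hu.symm
          have hcwb : cw = b := by
            have h1 := (hinv cw cu).mp hra
            rw [h1] at hrb
            injection hrb
          have hwu : w = u.set p b := by
            rw [← hc, List.set_set, ← hcwb, set_of_getElem? hw]
          have htake : w.take p = u.take p := by
            rw [← hc, take_set_le (le_refl p)]
          rw [htake]
          unfold dirac
          rw [if_pos hc, if_pos hwu]
        · have hwu : w ≠ u.set p b := by
            intro heq
            have hwb : w[p]? = some b := by
              rw [heq, List.getElem?_set_self (by omega)]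
            rw [hwb] at hw
            obtain rfl : cw = b := by injection hw.symm
            have h2 := (hinv cw cu).mpr hrb
            rw [h2] at hra
            obtain rfl : cu = a := by injection hra
            apply hc
            rw [heq, List.set_set, set_of_getElem? hu]
          unfold dirac
          rw [if_neg hc, if_neg hwu, mul_zero, mul_zero]
  · unfold Sop
    have h1 : ∀ p ∈ Finset.range w.length, (w[p]?.bind r).elim (0:K)
        (fun a => ksgn K (wordSharp (w.take p)) * dirac K u (w.set p a)) = 0 := by
      intro p _
      rcases h : w[p]?.bind r with _ | a
      · simp [h]
      · simp only [h, Option.elim_some]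
        have hz : dirac K u (w.set p a) = 0 := by
          unfold dirac
          rw [if_neg]
          intro heq
          exact hl (by simpa using congrArg List.length heq)
        rw [hz, mul_zero]
    have h2 : ∀ p ∈ Finset.range u.length, ((u[p]?.bind r').elim (0:WFun K ι)
        (fun a => ksgn K (wordSharp (u.take p)) • dirac K (u.set p a))) w = 0 := by
      intro p _
      rcases h : u[p]?.bind r' with _ | a
      · simp [h]
      · simp only [h, Option.elim_some, Pi.smul_apply, smul_eq_mul]
        have hz : dirac K (u.set p a) w = 0 := by
          unfold dirac
          rw [if_neg]
          intro heq
          exact hl (by simpa using congrArg List.length heq)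
        rw [hz, mul_zero]
    rw [Finset.sum_eq_zero h1, Finset.sum_eq_zero h2]

end PoincareDirac
section PoincareGcomm

open Finset List

variable {ι : Type} (K : Type) [Field K] [DecidableEq ι]

lemma ksgn_mul_congr (a b c d : ℤ) (h : Even (a + b - c - d)) :
    ksgn K a * ksgn K b = ksgn K c * ksgn K d := by
  rw [← ksgn_add, ← ksgn_add]
  exact ksgn_congr K (by rw [show a + b - (c + d) = a + b - c - d from by ring]; exact h)

set_option maxRecDepth 8000 in
lemma Sop_gcomm_mem (degx : ι → ℤ) (r r' : Letter ι → Option (Letter ι))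
    (hinv : ∀ a b, r a = some b ↔ r' b = some a)
    (hdeg : ∀ a b, r' a = some b → letterDeg degx b = letterDeg degx a)
    (hsharp : ∀ a b, r' a = some b → letterSharp a + letterSharp b = 1)
    (u v : GWord ι) :
    Sop K r (gcomm K degx u v) ∈
      Submodule.span K (Set.range fun uv : GWord ι × GWord ι => gcomm K degx uv.1 uv.2) := by
  set S := Submodule.span K (Set.range fun uv : GWord ι × GWord ι => gcomm K degx uv.1 uv.2)
    with hS
  have trick : ∀ x y : WFun K ι, x = y → y ∈ S → x ∈ S := fun x y h hy => h ▸ hy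
  set c := ksgn K (wordDeg degx u * wordDeg degx v + wordSharp u * wordSharp v) with hc
  have hrw : Sop K r (gcomm K degx u v)
      = Sop K r (dirac K (u ++ v)) - c • Sop K r (dirac K (v ++ u)) := by
    unfold gcomm
    rw [Sop_sub, Sop_smul, ← hc]
  rw [hrw, Sop_dirac K r r' hinv, Sop_dirac K r r' hinv]
  rw [List.length_append, List.length_append]
  rw [Finset.sum_range_add _ u.length v.length, Finset.sum_range_add _ v.length u.length]
  have e1 : ∀ p ∈ Finset.range u.length,
      ((u ++ v)[p]?.bind r').elim 0
        (fun a => ksgn K (wordSharp ((u ++ v).take p)) • dirac K ((u ++ v).set p a))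
      = (u[p]?.bind r').elim (0 : WFun K ι)
        (fun a => ksgn K (wordSharp (u.take p)) • dirac K (u.set p a ++ v)) := by
    intro p hp
    have hp' : p < u.length := Finset.mem_range.mp hp
    rw [List.getElem?_append_left hp']
    rcases h : u[p]?.bind r' with _ | a
    · rfl
    · simp only [h, Option.elim_some]
      rw [List.take_append_of_le_length hp'.le, List.set_append_left _ _ hp']
  have e2 : ∀ q ∈ Finset.range v.length,
      ((u ++ v)[u.length + q]?.bind r').elim 0
        (fun a => ksgn K (wordSharp ((u ++ v).take (u.length + q)))
          • dirac K ((u ++ v).set (u.length + q) a))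
      = (v[q]?.bind r').elim (0 : WFun K ι)
        (fun a => ksgn K (wordSharp u + wordSharp (v.take q)) • dirac K (u ++ v.set q a)) := by
    intro q hq
    rw [List.getElem?_append_right (Nat.le_add_right _ _), Nat.add_sub_cancel_left]
    rcases h : v[q]?.bind r' with _ | a
    · rfl
    · simp only [h, Option.elim_some]
      rw [List.take_length_add_append, wordSharp_append,
        List.set_append_right _ _ (Nat.le_add_right _ _), Nat.add_sub_cancel_left]
  have e3 : ∀ q ∈ Finset.range v.length,
      ((v ++ u)[q]?.bind r').elim 0
        (fun a => ksgn K (wordSharp ((v ++ u).take q)) • dirac K ((v ++ u).set q a))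
      = (v[q]?.bind r').elim (0 : WFun K ι)
        (fun a => ksgn K (wordSharp (v.take q)) • dirac K (v.set q a ++ u)) := by
    intro q hq
    have hq' : q < v.length := Finset.mem_range.mp hq
    rw [List.getElem?_append_left hq']
    rcases h : v[q]?.bind r' with _ | a
    · rfl
    · simp only [h, Option.elim_some]
      rw [List.take_append_of_le_length hq'.le, List.set_append_left _ _ hq']
  have e4 : ∀ p ∈ Finset.range u.length,
      ((v ++ u)[v.length + p]?.bind r').elim 0
        (fun a => ksgn K (wordSharp ((v ++ u).take (v.length + p)))
          • dirac K ((v ++ u).set (v.length + p) a))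
      = (u[p]?.bind r').elim (0 : WFun K ι)
        (fun a => ksgn K (wordSharp v + wordSharp (u.take p)) • dirac K (v ++ u.set p a)) := by
    intro p hp
    rw [List.getElem?_append_right (Nat.le_add_right _ _), Nat.add_sub_cancel_left]
    rcases h : u[p]?.bind r' with _ | a
    · rfl
    · simp only [h, Option.elim_some]
      rw [List.take_length_add_append, wordSharp_append,
        List.set_append_right _ _ (Nat.le_add_right _ _), Nat.add_sub_cancel_left]
  rw [Finset.sum_congr rfl e1, Finset.sum_congr rfl e2, Finset.sum_congr rfl e3,
    Finset.sum_congr rfl e4]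
  rw [smul_add, Finset.smul_sum, Finset.smul_sum]
  suffices hsum :
      ((∑ p ∈ Finset.range u.length,
          ((u[p]?.bind r').elim (0 : WFun K ι)
              (fun a => ksgn K (wordSharp (u.take p)) • dirac K (u.set p a ++ v))
            - c • (u[p]?.bind r').elim (0 : WFun K ι)
              (fun a => ksgn K (wordSharp v + wordSharp (u.take p)) • dirac K (v ++ u.set p a))))
        + (∑ q ∈ Finset.range v.length,
          ((v[q]?.bind r').elim (0 : WFun K ι)
              (fun a => ksgn K (wordSharp u + wordSharp (v.take q)) • dirac K (u ++ v.set q a))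
            - c • (v[q]?.bind r').elim (0 : WFun K ι)
              (fun a => ksgn K (wordSharp (v.take q)) • dirac K (v.set q a ++ u))))) ∈ S by
    refine trick _ _ ?_ hsum
    rw [Finset.sum_sub_distrib, Finset.sum_sub_distrib]
    abel
  refine Submodule.add_mem _ (Submodule.sum_mem _ fun p hp => ?_)
    (Submodule.sum_mem _ fun q hq => ?_)
  · rcases h : u[p]?.bind r' with _ | a
    · simp only [h, Option.elim_none, smul_zero, sub_zero]
      exact Submodule.zero_mem _
    · obtain ⟨b, hb, hr'b⟩ := Option.bind_eq_some_iff.mp h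
      have hab := hsharp b a hr'b
      have hdd := hdeg b a hr'b
      have hco : c * ksgn K (wordSharp v + wordSharp (u.take p))
          = ksgn K (wordSharp (u.take p)) *
            ksgn K (wordDeg degx (u.set p a) * wordDeg degx v
              + wordSharp (u.set p a) * wordSharp v) := by
        rw [hc]
        apply ksgn_mul_congr
        rw [sharp_set hb a, deg_set degx hb a]
        exact ⟨wordSharp v * letterSharp b,
          by linear_combination (-(wordSharp v)) * hab + (-(wordDeg degx v)) * hdd⟩
      simp only [h, Option.elim_some]
      refine trick _ _ ?_ (Submodule.smul_mem _ (ksgn K (wordSharp (u.take p)))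
        (Submodule.subset_span ⟨(u.set p a, v), rfl⟩))
      unfold gcomm
      rw [smul_sub, smul_smul, smul_smul, hco]
  · rcases h : v[q]?.bind r' with _ | a
    · simp only [h, Option.elim_none, smul_zero, sub_zero]
      exact Submodule.zero_mem _
    · obtain ⟨b, hb, hr'b⟩ := Option.bind_eq_some_iff.mp h
      have hab := hsharp b a hr'b
      have hdd := hdeg b a hr'b
      have hco : c * ksgn K (wordSharp (v.take q))
          = ksgn K (wordSharp u + wordSharp (v.take q)) *
            ksgn K (wordDeg degx u * wordDeg degx (v.set q a)
              + wordSharp u * wordSharp (v.set q a)) := by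
        rw [hc]
        apply ksgn_mul_congr
        rw [sharp_set hb a, deg_set degx hb a]
        exact ⟨wordSharp u * (letterSharp b - 1),
          by linear_combination (-(wordSharp u)) * hab + (-(wordDeg degx u)) * hdd⟩
      simp only [h, Option.elim_some]
      refine trick _ _ ?_ (Submodule.smul_mem _
        (ksgn K (wordSharp u + wordSharp (v.take q)))
        (Submodule.subset_span ⟨(u, v.set q a), rfl⟩))
      unfold gcomm
      rw [smul_sub, smul_smul, smul_smul, hco]

end PoincareGcomm
section PoincareFinal

open Finset List

variable {ι : Type} (K : Type) [Field K]

lemma rDH_inv : ∀ a b : Letter ι, rD a = some b ↔ rH b = some a := by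
  intro a b
  cases a <;> cases b <;> simp [rD, rH, eq_comm]

lemma rHD_inv : ∀ a b : Letter ι, rH a = some b ↔ rD b = some a := by
  intro a b
  cases a <;> cases b <;> simp [rD, rH, eq_comm]

lemma rH_deg (degx : ι → ℤ) :
    ∀ a b : Letter ι, rH a = some b → letterDeg degx b = letterDeg degx a := by
  intro a b h
  cases a with
  | inl i => obtain rfl : Sum.inr i = b := by injection h
             rfl
  | inr i => simp [rH] at h

lemma rD_deg (degx : ι → ℤ) :
    ∀ a b : Letter ι, rD a = some b → letterDeg degx b = letterDeg degx a := by
  intro a b h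
  cases a with
  | inl i => simp [rD] at h
  | inr i => obtain rfl : Sum.inl i = b := by injection h
             rfl

lemma rH_sharp : ∀ a b : Letter ι, rH a = some b → letterSharp a + letterSharp b = 1 := by
  intro a b h
  cases a with
  | inl i => obtain rfl : Sum.inr i = b := by injection h
             simp [letterSharp]
  | inr i => simp [rH] at h

lemma rD_sharp : ∀ a b : Letter ι, rD a = some b → letterSharp a + letterSharp b = 1 := by
  intro a b h
  cases a with
  | inl i => simp [rD] at h
  | inr i => obtain rfl : Sum.inl i = b := by injection h
             simp [letterSharp]

lemma Sop_span_mem [DecidableEq ι] (degx : ι → ℤ) (r r' : Letter ι → Option (Letter ι))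
    (hinv : ∀ a b, r a = some b ↔ r' b = some a)
    (hdeg : ∀ a b, r' a = some b → letterDeg degx b = letterDeg degx a)
    (hsharp : ∀ a b, r' a = some b → letterSharp a + letterSharp b = 1)
    {f : WFun K ι}
    (hf : f ∈ Submodule.span K
      (Set.range fun uv : GWord ι × GWord ι => gcomm K degx uv.1 uv.2)) :
    Sop K r f ∈ Submodule.span K
      (Set.range fun uv : GWord ι × GWord ι => gcomm K degx uv.1 uv.2) := by
  induction hf using Submodule.span_induction with
  | mem x hx =>
    obtain ⟨⟨u, v⟩, rfl⟩ := hx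
    exact Sop_gcomm_mem K degx r r' hinv hdeg hsharp u v
  | zero => rw [Sop_zero]; exact Submodule.zero_mem _
  | add x y hx hy ihx ihy => rw [Sop_add]; exact Submodule.add_mem _ ihx ihy
  | smul c x hx ih => rw [Sop_smul]; exact Submodule.smul_mem _ _ ih

/-! #### The homotopy identity -/

/-- The generic double substitution term. -/
def Dbl (f : WFun K ι) (w : GWord ι) (r r' : Letter ι → Option (Letter ι)) (p q : ℕ) : K :=
  (w[p]?.bind r).elim 0 (fun a => ksgn K (wordSharp (w.take p)) *
    ((w.set p a)[q]?.bind r').elim 0 (fun b =>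
      ksgn K (wordSharp ((w.set p a).take q)) * f ((w.set p a).set q b)))

lemma DH_eq (f : WFun K ι) (w : GWord ι) :
    Dop K (Hop K f) w = (w.length : K)⁻¹ *
      ∑ p ∈ Finset.range w.length, ∑ q ∈ Finset.range w.length, Dbl K f w rD rH p q := by
  rw [Dop_eq]
  unfold Sop
  rw [Finset.mul_sum]
  refine Finset.sum_congr rfl fun p hp => ?_
  rcases h : w[p]?.bind rD with _ | a
  · simp only [h, Option.elim_none]
    rw [Finset.sum_eq_zero, mul_zero]
    intro q _
    simp [Dbl, h]
  · have hs : Sop K rH f (w.set p a) = ∑ q ∈ Finset.range w.length,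
        ((w.set p a)[q]?.bind rH).elim 0 (fun b =>
          ksgn K (wordSharp ((w.set p a).take q)) * f ((w.set p a).set q b)) := by
      unfold Sop
      rw [List.length_set]
    simp only [Dbl, h, Option.elim_some]
    rw [Hop_eq, List.length_set, hs, ← Finset.mul_sum]
    ring

lemma HD_eq (f : WFun K ι) (w : GWord ι) :
    Hop K (Dop K f) w = (w.length : K)⁻¹ *
      ∑ p ∈ Finset.range w.length, ∑ q ∈ Finset.range w.length, Dbl K f w rH rD q p := by
  rw [Hop_eq]
  congr 1
  rw [Finset.sum_comm]
  unfold Sop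
  refine Finset.sum_congr rfl fun q hq => ?_
  rcases h : w[q]?.bind rH with _ | b
  · simp only [h, Option.elim_none]
    rw [Finset.sum_eq_zero]
    intro p _
    simp [Dbl, h]
  · have hs : Dop K f (w.set q b) = ∑ p ∈ Finset.range w.length,
        ((w.set q b)[p]?.bind rD).elim 0 (fun a =>
          ksgn K (wordSharp ((w.set q b).take p)) * f ((w.set q b).set p a)) := by
      rw [Dop_eq]
      unfold Sop
      rw [List.length_set]
    simp only [Dbl, h, Option.elim_some]
    rw [hs, ← Finset.mul_sum]

lemma Dbl_diag (f : WFun K ι) (w : GWord ι) (p : ℕ) (hp : p < w.length) :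
    Dbl K f w rD rH p p + Dbl K f w rH rD p p = f w := by
  obtain ⟨c0, hc0⟩ : ∃ c0, w[p]? = some c0 := ⟨_, List.getElem?_eq_getElem hp⟩
  cases c0 with
  | inl i =>
    have h1 : w[p]?.bind rD = none := by rw [hc0]; rfl
    have h2 : w[p]?.bind rH = some (Sum.inr i) := by rw [hc0]; rfl
    have h3 : ((w.set p (Sum.inr i))[p]?).bind rD = some (Sum.inl i) := by
      rw [List.getElem?_set_self (by omega)]; rfl
    simp only [Dbl, h1, h2, h3, Option.elim_none, Option.elim_some, zero_add]
    rw [take_set_le (le_refl p), List.set_set, set_of_getElem? hc0,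
      ← mul_assoc, ksgn_mul_self, one_mul]
  | inr i =>
    have h1 : w[p]?.bind rH = none := by rw [hc0]; rfl
    have h2 : w[p]?.bind rD = some (Sum.inl i) := by rw [hc0]; rfl
    have h3 : ((w.set p (Sum.inl i))[p]?).bind rH = some (Sum.inr i) := by
      rw [List.getElem?_set_self (by omega)]; rfl
    simp only [Dbl, h1, h2, h3, Option.elim_none, Option.elim_some, add_zero]
    rw [take_set_le (le_refl p), List.set_set, set_of_getElem? hc0,
      ← mul_assoc, ksgn_mul_self, one_mul]

lemma Dbl_antisymm (r r' : Letter ι → Option (Letter ι))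
    (hs : ∀ a b, r a = some b → letterSharp a + letterSharp b = 1)
    (hs' : ∀ a b, r' a = some b → letterSharp a + letterSharp b = 1)
    (f : WFun K ι) (w : GWord ι) (p q : ℕ)
    (hp : p < w.length) (hq : q < w.length) (hne : p ≠ q) :
    Dbl K f w r r' p q + Dbl K f w r' r q p = 0 := by
  obtain ⟨cp, hcp⟩ : ∃ c, w[p]? = some c := ⟨_, List.getElem?_eq_getElem hp⟩
  obtain ⟨cq, hcq⟩ : ∃ c, w[q]? = some c := ⟨_, List.getElem?_eq_getElem hq⟩
  have hpq : ∀ a : Letter ι, (w.set p a)[q]? = some cq := fun a => by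
    rw [List.getElem?_set_ne hne]; exact hcq
  have hqp : ∀ b : Letter ι, (w.set q b)[p]? = some cp := fun b => by
    rw [List.getElem?_set_ne (Ne.symm hne)]; exact hcp
  rcases hra : r cp with _ | a
  · rcases hrb : r' cq with _ | b
    · simp [Dbl, hcp, hcq, hra, hrb]
    · simp [Dbl, hcp, hcq, hra, hrb, hqp b]
  · rcases hrb : r' cq with _ | b
    · simp [Dbl, hcp, hcq, hra, hrb, hpq a]
    · have hfeq : (w.set p a).set q b = (w.set q b).set p a := List.set_comm _ _ hne
      have key1 : Dbl K f w r r' p q = ksgn K (wordSharp (w.take p)) *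
          (ksgn K (wordSharp ((w.set p a).take q)) * f ((w.set p a).set q b)) := by
        simp [Dbl, hcp, hra, hpq a, hrb]
      have key2 : Dbl K f w r' r q p = ksgn K (wordSharp (w.take q)) *
          (ksgn K (wordSharp ((w.set q b).take p)) * f ((w.set q b).set p a)) := by
        simp [Dbl, hcq, hrb, hqp b, hra]
      rw [key1, key2, hfeq]
      rcases Nat.lt_or_ge p q with hlt | hge
      · have hodd : Odd (letterSharp a - letterSharp cp) := by
          have := hs cp a hra
          exact ⟨-letterSharp cp, by linarith⟩
        rw [sharp_take_set_lt hlt hcp a, take_set_le (le_of_lt hlt) b,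
          ksgn_add_odd _ _ hodd]
        ring
      · have hgt : q < p := by omega
        have hodd : Odd (letterSharp b - letterSharp cq) := by
          have := hs' cq b hrb
          exact ⟨-letterSharp cq, by linarith⟩
        rw [take_set_le (le_of_lt hgt) a, sharp_take_set_lt hgt hcq b,
          ksgn_add_odd _ _ hodd]
        ring

lemma homotopy [CharZero K] (f : WFun K ι) {w : GWord ι} (hw : w.length ≠ 0) :
    Dop K (Hop K f) w + Hop K (Dop K f) w = f w := by
  rw [DH_eq, HD_eq, ← mul_add, ← Finset.sum_add_distrib]
  have key : ∀ p ∈ Finset.range w.length,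
      ((∑ q ∈ Finset.range w.length, Dbl K f w rD rH p q)
        + ∑ q ∈ Finset.range w.length, Dbl K f w rH rD q p) = f w := by
    intro p hp
    rw [← Finset.sum_add_distrib, Finset.sum_eq_single p]
    · exact Dbl_diag K f w p (Finset.mem_range.mp hp)
    · intro q hq hqp
      exact Dbl_antisymm K rD rH rD_sharp rH_sharp f w p q
        (Finset.mem_range.mp hp) (Finset.mem_range.mp hq) (Ne.symm hqp)
    · intro hnotin
      exact absurd hp hnotin
  rw [Finset.sum_congr rfl key, Finset.sum_const, Finset.card_range, nsmul_eq_mul,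
    inv_mul_cancel_left₀ (Nat.cast_ne_zero.mpr hw)]

end PoincareFinal
/-- **Theorem (Poincaré lemma; Cho–Lee, Theorem 2.3, after Kajiura).**
The cohomology of the cyclic de Rham complex `(Ω_{cyc}(X), d)` of a formal
noncommutative manifold is trivial: the operators `d` and `H` (with `H(x_i) = 0`,
`H(dx_i) = x_i`, extended with the `1/k` normalization) descend to
`Ω_{cyc}(X) = 𝒪(T[1]X)/[·,·]_{top}`, where they satisfy `dH + Hd = Id` (on forms with
no constant term); in particular every closed form is exact. -/
theorem noncommutative_poincare_lemma
    (K : Type) [Field K] [CharZero K] (ι : Type) [Fintype ι] [DecidableEq ι]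
    (degx : ι → ℤ) :
    -- `d` and `H` descend to the cyclic quotient:
    (∀ f ∈ CommT K degx, Dop K f ∈ CommT K degx ∧ Hop K f ∈ CommT K degx) ∧
    -- the homotopy identity `dH + Hd = Id` on `Ω_{cyc}(X)`:
    (∀ f : WFun K ι, f [] = 0 →
      Dop K (Hop K f) + Hop K (Dop K f) - f ∈ CommT K degx) ∧
    -- hence the cohomology is trivial:
    (∀ f : WFun K ι, f [] = 0 → Dop K f ∈ CommT K degx →
      ∃ g : WFun K ι, f - Dop K g ∈ CommT K degx) := by
  have P1 : ∀ f ∈ CommT K degx, Dop K f ∈ CommT K degx ∧ Hop K f ∈ CommT K degx := by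
    intro f hf
    have hf' : ∀ m : ℕ, trunc K m f ∈ Submodule.span K
        (Set.range fun uv : GWord ι × GWord ι => gcomm K degx uv.1 uv.2) := hf
    constructor
    · intro m
      have h1 : trunc K m (Dop K f) = Sop K rD (trunc K m f) := by
        rw [Dop_eq, Sop_trunc]
      rw [h1]
      exact Sop_span_mem K degx rD rH rDH_inv (rH_deg degx) rH_sharp (hf' m)
    · intro m
      have h2 : trunc K m (Hop K f) = (m : K)⁻¹ • trunc K m (Sop K rH f) := by
        funext w
        simp only [trunc, Pi.smul_apply, smul_eq_mul]
        by_cases h : w.length = m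
        · rw [if_pos h, if_pos h, Hop_eq, h]
        · rw [if_neg h, if_neg h, mul_zero]
      rw [h2, Sop_trunc]
      exact Submodule.smul_mem _ _
        (Sop_span_mem K degx rH rD rHD_inv (rD_deg degx) rD_sharp (hf' m))
  have P2 : ∀ f : WFun K ι, f [] = 0 →
      Dop K (Hop K f) + Hop K (Dop K f) - f ∈ CommT K degx := by
    intro f hf0
    have hzero : Dop K (Hop K f) + Hop K (Dop K f) - f = 0 := by
      funext w
      simp only [Pi.sub_apply, Pi.add_apply, Pi.zero_apply]
      by_cases hw : w.length = 0
      · obtain rfl : w = [] := List.length_eq_zero_iff.mp hw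
        rw [Dop_empty, Hop_empty, hf0]
        ring
      · rw [homotopy K f hw, sub_self]
    rw [hzero]
    exact Submodule.zero_mem _
  refine ⟨P1, P2, ?_⟩
  intro f hf0 hdf
  refine ⟨Hop K f, ?_⟩
  have heq : f - Dop K (Hop K f) =
      Hop K (Dop K f) - (Dop K (Hop K f) + Hop K (Dop K f) - f) := by ring
  rw [heq]
  exact Submodule.sub_mem _ ((P1 (Dop K f) hdf).2) (P2 f hf0)

end KS
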